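/- Let k ≥ 1 and suppose that for every nondecreasing 2k-tuple of real numbers (y₁ ≤ ⋯ ≤ y_{2k}) and every partition of {1, …, 2k} into two k-element subsets S and T, the consecutive split satisfies A(y₁, …, y_k) + A(y_{k+1}, …, y_{2k}) ≤ A(y_S) + A(y_T). Then for every n ≥ 1, every nondecreasing kn-tuple of real numbers (x₁ ≤ ⋯ ≤ x_{kn}), and every partition of {1, …, kn} into n pairwise disjoint k-element subsets S₁, …, S_n, the partition into n consecutive blocks is minimal: ∑_{m=1}^{n} A(x_{(m−1)k+1}, …, x_{(m−1)k+k}) ≤ ∑_{m=1}^{n} A(x_{S_m}). -/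

import Mathlib

/-- The distance within the tuple of values indexed by a finite index set `S`:
the sum of `|x j - x i|` over all pairs `i < j` in `S`. -/
def distWithin {m : ℕ} (x : Fin m → ℝ) (S : Finset (Fin m)) : ℝ :=
  ∑ i ∈ S, ∑ j ∈ S.filter (fun j => i < j), |x j - x i|

lemma distWithin_image {m M : ℕ} (x : Fin M → ℝ) (e : Fin m → Fin M) (he : StrictMono e)
    (A : Finset (Fin m)) : distWithin x (A.image e) = distWithin (x ∘ e) A := by
  unfold distWithin
  rw [Finset.sum_image (fun a _ b _ h => he.injective h)]
  refine Finset.sum_congr rfl fun i hi => ?_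
  have h1 : (A.image e).filter (fun j => e i < j) = (A.filter (fun j => i < j)).image e := by
    ext j
    simp only [Finset.mem_filter, Finset.mem_image]
    constructor
    · rintro ⟨⟨a, ha, rfl⟩, hlt⟩; exact ⟨a, ⟨ha, he.lt_iff_lt.mp hlt⟩, rfl⟩
    · rintro ⟨a, ⟨ha, hlt⟩, rfl⟩; exact ⟨⟨a, ha, rfl⟩, he hlt⟩
  rw [h1, Finset.sum_image (fun a _ b _ h => he.injective h)]
  rfl

lemma card_interval {N : ℕ} (a b : ℕ) (hb : b ≤ N) :
    (Finset.univ.filter (fun i : Fin N => a ≤ (i:ℕ) ∧ (i:ℕ) < b)).card = b - a := by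
  rw [← Finset.card_image_of_injective _ Fin.val_injective]
  have : ((Finset.univ.filter (fun i : Fin N => a ≤ (i:ℕ) ∧ (i:ℕ) < b)).image Fin.val)
      = Finset.Ico a b := by
    ext v
    simp only [Finset.mem_image, Finset.mem_filter, Finset.mem_univ, true_and, Finset.mem_Ico]
    constructor
    · rintro ⟨i, hi, rfl⟩; exact hi
    · rintro ⟨h1, h2⟩; exact ⟨⟨v, lt_of_lt_of_le h2 hb⟩, ⟨h1, h2⟩, rfl⟩
  rw [this, Nat.card_Ico]

def cblock {M k n : ℕ} (W : Finset (Fin M)) (h : W.card = k * n) (m : Fin n) :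
    Finset (Fin M) :=
  (Finset.univ.filter
    (fun i : Fin (k*n) => (m:ℕ)*k ≤ (i:ℕ) ∧ (i:ℕ) < (m:ℕ)*k + k)).image (W.orderEmbOfFin h)

lemma mk_bound {k n : ℕ} (m : Fin n) : (m:ℕ)*k + k ≤ k*n := by
  calc (m:ℕ)*k + k = ((m:ℕ)+1)*k := by ring
  _ ≤ n*k := Nat.mul_le_mul_right k m.isLt
  _ = k*n := Nat.mul_comm n k

lemma cblock_card {M k n : ℕ} (W : Finset (Fin M)) (h : W.card = k * n) (m : Fin n) :
    (cblock W h m).card = k := by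
  unfold cblock
  rw [Finset.card_image_of_injective _ (W.orderEmbOfFin h).injective,
    card_interval _ _ (mk_bound m)]
  omega

lemma cblock_subset {M k n : ℕ} (W : Finset (Fin M)) (h : W.card = k * n) (m : Fin n) :
    cblock W h m ⊆ W := by
  unfold cblock
  intro w hw
  obtain ⟨i, _, rfl⟩ := Finset.mem_image.mp hw
  exact W.orderEmbOfFin_mem h i

lemma cblock_last_ord {M k n : ℕ} (W : Finset (Fin M)) (h : W.card = k * (n+1)) :
    ∀ w ∈ W, w ∉ cblock W h (Fin.last n) → ∀ t ∈ cblock W h (Fin.last n), w < t := by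
  intro w hw hwt t ht
  set e := W.orderEmbOfFin h with he_def
  obtain ⟨j, hj, rfl⟩ := Finset.mem_image.mp ht
  simp only [Finset.mem_filter, Finset.mem_univ, true_and, Fin.val_last] at hj
  have hwr : w ∈ Set.range e := by rw [W.range_orderEmbOfFin h]; exact_mod_cast hw
  obtain ⟨i, rfl⟩ := hwr
  have hi : (i:ℕ) < n * k := by
    by_contra hcon
    push_neg at hcon
    apply hwt
    refine Finset.mem_image.mpr ⟨i, ?_, rfl⟩
    simp only [Finset.mem_filter, Finset.mem_univ, true_and, Fin.val_last]
    have := i.isLt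
    constructor
    · exact hcon
    · have : k * (n+1) = n*k + k := by ring
      omega
  exact e.strictMono (show i < j from by omega)

lemma cblock_sdiff_card {M k n : ℕ} (W : Finset (Fin M)) (h : W.card = k * (n+1)) :
    (W \ cblock W h (Fin.last n)).card = k * n := by
  rw [Finset.card_sdiff_of_subset (cblock_subset W h (Fin.last n)), cblock_card W h, h]
  have : k * (n+1) = k*n + k := by ring
  omega

lemma cblock_prefix {M k n : ℕ} (W : Finset (Fin M)) (h : W.card = k * (n+1))
    (h' : (W \ cblock W h (Fin.last n)).card = k * n) (m : Fin n) :
    cblock (W \ cblock W h (Fin.last n)) h' m = cblock W h m.castSucc := by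
  have hle : k * n ≤ k * (n+1) := Nat.mul_le_mul_left k (by omega)
  have hcomm : k * n = n * k := Nat.mul_comm k n
  set e := W.orderEmbOfFin h with he_def
  set f : Fin (k*n) ↪o Fin M :=
    OrderEmbedding.ofStrictMono (fun i => e (Fin.castLE hle i))
      (fun i j hij => e.strictMono (by simpa using hij)) with hf_def
  have hfe : f = (W \ cblock W h (Fin.last n)).orderEmbOfFin h' := by
    apply Finset.orderEmbOfFin_unique' h'
    intro i
    rw [Finset.mem_sdiff]
    constructor
    · exact W.orderEmbOfFin_mem h _
    · intro hcon
      obtain ⟨j, hj, hje⟩ := Finset.mem_image.mp hcon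
      simp only [Finset.mem_filter, Finset.mem_univ, true_and, Fin.val_last] at hj
      have hij : Fin.castLE hle i = j := e.injective hje.symm
      have hij2 : (i:ℕ) = (j:ℕ) := by rw [← hij]; rfl
      have := i.isLt
      omega
  have hpt : ∀ i, (W \ cblock W h (Fin.last n)).orderEmbOfFin h' i
      = e (Fin.castLE hle i) := fun i => by rw [← hfe]; rfl
  simp only [cblock] at hpt
  ext w
  simp only [cblock, Finset.mem_image, Finset.mem_filter, Finset.mem_univ, true_and,
    Fin.coe_castSucc]
  constructor
  · rintro ⟨i, hi, rfl⟩
    rw [hpt]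
    exact ⟨Fin.castLE hle i, ⟨hi.1, hi.2⟩, rfl⟩
  · rintro ⟨j, hj, rfl⟩
    have hjlt : (j:ℕ) < k * n := lt_of_lt_of_le hj.2 (mk_bound m)
    refine ⟨⟨(j:ℕ), hjlt⟩, ⟨hj.1, hj.2⟩, ?_⟩
    rw [hpt]
    rfl

lemma exchange {k M : ℕ} (hk : 1 ≤ k)
    (hyp : ∀ (y : Fin (2 * k) → ℝ), Monotone y →
      ∀ S T : Finset (Fin (2 * k)), S.card = k → T.card = k → Disjoint S T →
        S ∪ T = Finset.univ →
        distWithin y (Finset.univ.filter (fun i => (i : ℕ) < k)) +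
          distWithin y (Finset.univ.filter (fun i => k ≤ (i : ℕ))) ≤
        distWithin y S + distWithin y T)
    (x : Fin M → ℝ) (hx : Monotone x)
    (A B : Finset (Fin M)) (hA : A.card = k) (hB : B.card = k) (hAB : Disjoint A B) :
    ∃ L H : Finset (Fin M), L.card = k ∧ H.card = k ∧ Disjoint L H ∧ L ∪ H = A ∪ B ∧
      (∀ l ∈ L, ∀ h ∈ H, l < h) ∧
      distWithin x L + distWithin x H ≤ distWithin x A + distWithin x B := by
  have hU : (A ∪ B).card = 2 * k := by
    rw [Finset.card_union_of_disjoint hAB, hA, hB]; ring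
  set e := (A ∪ B).orderEmbOfFin hU with he_def
  have he : StrictMono e := ((A ∪ B).orderEmbOfFin hU).strictMono
  set lowF := Finset.univ.filter (fun i : Fin (2*k) => (i:ℕ) < k) with hlowF
  set highF := Finset.univ.filter (fun i : Fin (2*k) => k ≤ (i:ℕ)) with hhighF
  refine ⟨lowF.image e, highF.image e, ?_, ?_, ?_, ?_, ?_, ?_⟩
  · rw [Finset.card_image_of_injective _ he.injective]
    have : lowF = Finset.univ.filter (fun i : Fin (2*k) => 0 ≤ (i:ℕ) ∧ (i:ℕ) < k) := by
      ext i; simp [hlowF]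
    rw [this, card_interval 0 k (by omega)]; omega
  · rw [Finset.card_image_of_injective _ he.injective]
    have : highF = Finset.univ.filter (fun i : Fin (2*k) => k ≤ (i:ℕ) ∧ (i:ℕ) < 2*k) := by
      ext i; simp [hhighF, i.isLt]
    rw [this, card_interval k (2*k) le_rfl]; omega
  · rw [Finset.disjoint_image he.injective]
    rw [Finset.disjoint_filter]
    intro i _ h; omega
  · rw [← Finset.image_union]
    have h1 : lowF ∪ highF = Finset.univ := by
      ext i; simp only [Finset.mem_union, hlowF, hhighF, Finset.mem_filter, Finset.mem_univ,
        true_and, Finset.mem_univ, iff_true]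
      omega
    rw [h1]
    apply Finset.coe_injective
    rw [Finset.coe_image, Finset.coe_univ, Set.image_univ]
    exact (A ∪ B).range_orderEmbOfFin hU
  · rintro l hl h hh
    simp only [Finset.mem_image, hlowF, hhighF, Finset.mem_filter, Finset.mem_univ, true_and]
      at hl hh
    obtain ⟨i, hi, rfl⟩ := hl
    obtain ⟨j, hj, rfl⟩ := hh
    exact he (show i < j by omega)
  · -- cost inequality
    have hmemU : ∀ a, a ∈ A ∪ B → ∃ i, e i = a := by
      intro a ha
      have : a ∈ Set.range e := by rw [(A ∪ B).range_orderEmbOfFin hU]; exact_mod_cast ha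
      exact this
    set SA := Finset.univ.filter (fun i : Fin (2*k) => e i ∈ A) with hSA
    set SB := Finset.univ.filter (fun i : Fin (2*k) => e i ∈ B) with hSB
    have himA : SA.image e = A := by
      ext a
      simp only [hSA, Finset.mem_image, Finset.mem_filter, Finset.mem_univ, true_and]
      constructor
      · rintro ⟨i, hi, rfl⟩; exact hi
      · intro ha
        obtain ⟨i, rfl⟩ := hmemU a (Finset.mem_union_left _ ha)
        exact ⟨i, ha, rfl⟩
    have himB : SB.image e = B := by
      ext a
      simp only [hSB, Finset.mem_image, Finset.mem_filter, Finset.mem_univ, true_and]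
      constructor
      · rintro ⟨i, hi, rfl⟩; exact hi
      · intro ha
        obtain ⟨i, rfl⟩ := hmemU a (Finset.mem_union_right _ ha)
        exact ⟨i, ha, rfl⟩
    have hSAcard : SA.card = k := by
      have h2 := Finset.card_image_of_injective SA he.injective
      rw [himA, hA] at h2; omega
    have hSBcard : SB.card = k := by
      have h2 := Finset.card_image_of_injective SB he.injective
      rw [himB, hB] at h2; omega
    have hSdisj : Disjoint SA SB := by
      rw [Finset.disjoint_left]
      intro i hiA hiB
      simp only [hSA, hSB, Finset.mem_filter, Finset.mem_univ, true_and] at hiA hiB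
      exact (Finset.disjoint_left.mp hAB) hiA hiB
    have hScover : SA ∪ SB = Finset.univ := by
      ext i
      simp only [Finset.mem_union, hSA, hSB, Finset.mem_filter, Finset.mem_univ, true_and,
        iff_true]
      have := (A ∪ B).orderEmbOfFin_mem hU i
      rwa [Finset.mem_union] at this
    have key := hyp (x ∘ e) (hx.comp he.monotone) SA SB hSAcard hSBcard hSdisj hScover
    rw [← distWithin_image x e he SA, ← distWithin_image x e he SB, himA, himB] at key
    rw [distWithin_image x e he lowF, distWithin_image x e he highF]
    exact key

lemma gather {k M : ℕ} (hk : 1 ≤ k)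
    (hyp : ∀ (y : Fin (2 * k) → ℝ), Monotone y →
      ∀ S T : Finset (Fin (2 * k)), S.card = k → T.card = k → Disjoint S T →
        S ∪ T = Finset.univ →
        distWithin y (Finset.univ.filter (fun i => (i : ℕ) < k)) +
          distWithin y (Finset.univ.filter (fun i => k ≤ (i : ℕ))) ≤
        distWithin y S + distWithin y T)
    (x : Fin M → ℝ) (hx : Monotone x) {ι : Type} [DecidableEq ι] [Fintype ι]
    (W Top : Finset (Fin M)) (hTopcard : Top.card = k) (hTopsub : Top ⊆ W)
    (hTopOrd : ∀ w ∈ W, w ∉ Top → ∀ t ∈ Top, w < t) :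
    ∀ (d : ℕ) (S : ι → Finset (Fin M)), (∀ i, (S i).card = k) →
      (Pairwise fun a b => Disjoint (S a) (S b)) → (∀ i, S i ⊆ W) →
      (∀ w ∈ W, ∃ i, w ∈ S i) → ∀ a : ι, k - ((S a) ∩ Top).card ≤ d →
      ∃ S' : ι → Finset (Fin M), (∀ i, (S' i).card = k) ∧
        (Pairwise fun a b => Disjoint (S' a) (S' b)) ∧ (∀ i, S' i ⊆ W) ∧
        (∀ w ∈ W, ∃ i, w ∈ S' i) ∧ S' a = Top ∧
        ∑ i, distWithin x (S' i) ≤ ∑ i, distWithin x (S i) := by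
  have base : ∀ (S : ι → Finset (Fin M)), (∀ i, (S i).card = k) → ∀ a : ι,
      k ≤ ((S a) ∩ Top).card → S a = Top := by
    intro S hcard a hc
    have h1 : S a ∩ Top = S a :=
      Finset.eq_of_subset_of_card_le Finset.inter_subset_left (by rw [hcard a]; exact hc)
    have h2 : S a ⊆ Top := by rw [← h1]; exact Finset.inter_subset_right
    exact Finset.eq_of_subset_of_card_le h2 (by rw [hTopcard, hcard a])
  intro d
  induction d with
  | zero =>
    intro S hcard hdisj hsub hcover a hm
    exact ⟨S, hcard, hdisj, hsub, hcover, base S hcard a (by omega), le_refl _⟩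
  | succ d ihd =>
    intro S hcard hdisj hsub hcover a hm
    by_cases hc : k ≤ ((S a) ∩ Top).card
    · exact ⟨S, hcard, hdisj, hsub, hcover, base S hcard a hc, le_refl _⟩
    push_neg at hc
    have hnotsub : ¬ Top ⊆ S a := by
      intro hts
      have : S a ∩ Top = Top := Finset.inter_eq_right.mpr hts
      rw [this, hTopcard] at hc
      omega
    obtain ⟨t, htTop, htSa⟩ := Finset.not_subset.mp hnotsub
    obtain ⟨b, htb⟩ := hcover t (hTopsub htTop)
    have hba : b ≠ a := fun h => htSa (h ▸ htb)
    have hABdisj : Disjoint (S a) (S b) := hdisj (Ne.symm hba)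
    obtain ⟨L, H, hLc, hHc, hLH, hUn, hOrd, hcost⟩ :=
      exchange hk hyp x hx (S a) (S b) (hcard a) (hcard b) hABdisj
    set S' : ι → Finset (Fin M) :=
      Function.update (Function.update S b L) a H with hS'def
    have hS'a : S' a = H := by simp [hS'def]
    have hS'b : S' b = L := by simp [hS'def, Function.update_of_ne hba]
    have hS'other : ∀ c, c ≠ a → c ≠ b → S' c = S c := by
      intro c hca hcb
      simp [hS'def, Function.update_of_ne hca, Function.update_of_ne hcb]
    have hHsub : H ⊆ S a ∪ S b := by rw [← hUn]; exact Finset.subset_union_right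
    have hLsub : L ⊆ S a ∪ S b := by rw [← hUn]; exact Finset.subset_union_left
    have hUsubW : S a ∪ S b ⊆ W := Finset.union_subset (hsub a) (hsub b)
    have hHTop : ∀ u, u ∈ S a ∪ S b → u ∈ Top → u ∈ H := by
      intro u hu hutop
      by_contra huH
      have huL : u ∈ L := by
        have : u ∈ L ∪ H := hUn ▸ hu
        rcases Finset.mem_union.mp this with h | h
        · exact h
        · exact absurd h huH
      have hHsubTop : H ⊆ Top := by
        intro h hh
        by_contra hhT
        have h1 : h < u := hTopOrd h (hUsubW (hHsub hh)) hhT u hutop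
        have h2 : u < h := hOrd u huL h hh
        exact absurd h1 (lt_asymm h2)
      have hins : insert u H ⊆ Top := Finset.insert_subset hutop hHsubTop
      have : (insert u H).card ≤ k := hTopcard ▸ Finset.card_le_card hins
      rw [Finset.card_insert_of_notMem huH, hHc] at this
      omega
    have hmeas : k - ((S' a) ∩ Top).card ≤ d := by
      have htH : t ∈ H := hHTop t (Finset.mem_union_right _ htb) htTop
      have h1 : insert t (S a ∩ Top) ⊆ H ∩ Top := by
        intro u hu
        rcases Finset.mem_insert.mp hu with rfl | hu'
        · exact Finset.mem_inter.mpr ⟨htH, htTop⟩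
        · obtain ⟨h1, h2⟩ := Finset.mem_inter.mp hu'
          exact Finset.mem_inter.mpr ⟨hHTop u (Finset.mem_union_left _ h1) h2, h2⟩
      have htnot : t ∉ S a ∩ Top := fun h => htSa (Finset.mem_inter.mp h).1
      have h2 : (S a ∩ Top).card + 1 ≤ (H ∩ Top).card := by
        rw [← Finset.card_insert_of_notMem htnot]
        exact Finset.card_le_card h1
      rw [hS'a]
      omega
    have hcards' : ∀ i, (S' i).card = k := by
      intro i
      by_cases hia : i = a
      · rw [hia, hS'a, hHc]
      by_cases hib : i = b
      · rw [hib, hS'b, hLc]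
      rw [hS'other i hia hib]; exact hcard i
    have hsub' : ∀ i, S' i ⊆ W := by
      intro i
      by_cases hia : i = a
      · rw [hia, hS'a]; exact hHsub.trans hUsubW
      by_cases hib : i = b
      · rw [hib, hS'b]; exact hLsub.trans hUsubW
      rw [hS'other i hia hib]; exact hsub i
    have hcover' : ∀ w ∈ W, ∃ i, w ∈ S' i := by
      intro w hw
      obtain ⟨i, hi⟩ := hcover w hw
      by_cases hia : i = a
      · subst hia
        have : w ∈ L ∪ H := hUn ▸ Finset.mem_union_left _ hi
        rcases Finset.mem_union.mp this with h | h
        · exact ⟨b, hS'b ▸ h⟩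
        · exact ⟨i, hS'a ▸ h⟩
      by_cases hib : i = b
      · subst hib
        have : w ∈ L ∪ H := hUn ▸ Finset.mem_union_right _ hi
        rcases Finset.mem_union.mp this with h | h
        · exact ⟨i, hS'b ▸ h⟩
        · exact ⟨a, hS'a ▸ h⟩
      exact ⟨i, (hS'other i hia hib) ▸ hi⟩
    have hdisjU : ∀ c, c ≠ a → c ≠ b → Disjoint (S a ∪ S b) (S c) := by
      intro c hca hcb
      exact Finset.disjoint_union_left.mpr ⟨hdisj (Ne.symm hca), hdisj (Ne.symm hcb)⟩
    have hdisj' : Pairwise fun i j => Disjoint (S' i) (S' j) := by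
      intro i j hij
      by_cases hia : i = a
      · subst hia
        rw [hS'a]
        by_cases hjb : j = b
        · rw [hjb, hS'b]; exact hLH.symm
        · rw [hS'other j (Ne.symm hij) hjb]
          exact (hdisjU j (Ne.symm hij) hjb).symm.mono_right hHsub |>.symm
      by_cases hib : i = b
      · subst hib
        rw [hS'b]
        by_cases hja : j = a
        · rw [hja, hS'a]; exact hLH
        · rw [hS'other j hja (Ne.symm hij)]
          exact (hdisjU j hja (Ne.symm hij)).symm.mono_right hLsub |>.symm
      rw [hS'other i hia hib]
      by_cases hja : j = a
      · rw [hja, hS'a]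
        exact (hdisjU i hia hib).symm.mono_right hHsub
      by_cases hjb : j = b
      · rw [hjb, hS'b]
        exact (hdisjU i hia hib).symm.mono_right hLsub
      rw [hS'other j hja hjb]
      exact hdisj hij
    have hcost' : ∑ i, distWithin x (S' i) ≤ ∑ i, distWithin x (S i) := by
      have hfun : ∀ i, distWithin x (S' i) =
          Function.update (Function.update (fun j => distWithin x (S j)) b
            (distWithin x L)) a (distWithin x H) i := by
        intro i
        by_cases hia : i = a
        · subst hia; rw [hS'a]; simp
        by_cases hib : i = b
        · subst hib
          rw [hS'b, Function.update_of_ne hia, Function.update_self]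
        rw [hS'other i hia hib, Function.update_of_ne hia, Function.update_of_ne hib]
      rw [Finset.sum_congr rfl (fun i _ => hfun i)]
      rw [Finset.sum_update_of_mem (Finset.mem_univ a)]
      have hbmem : b ∈ Finset.univ \ {a} := by
        simp [Finset.mem_sdiff, hba]
      rw [Finset.sum_update_of_mem hbmem]
      have h1 : ∑ i, distWithin x (S i) =
          ∑ i ∈ (Finset.univ \ {a}) \ {b}, distWithin x (S i)
            + distWithin x (S b) + distWithin x (S a) := by
        rw [Finset.sum_eq_sum_sdiff_singleton_add (Finset.mem_univ a) (fun i => distWithin x (S i)),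
          Finset.sum_eq_sum_sdiff_singleton_add hbmem (fun i => distWithin x (S i))]
      rw [h1]
      linarith
    obtain ⟨S'', hc'', hd'', hs'', hcov'', ha'', hco''⟩ :=
      ihd S' hcards' hdisj' hsub' hcover' a hmeas
    exact ⟨S'', hc'', hd'', hs'', hcov'', ha'', le_trans hco'' hcost'⟩

lemma main_lemma {k M : ℕ} (hk : 1 ≤ k)
    (hyp : ∀ (y : Fin (2 * k) → ℝ), Monotone y →
      ∀ S T : Finset (Fin (2 * k)), S.card = k → T.card = k → Disjoint S T →
        S ∪ T = Finset.univ →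
        distWithin y (Finset.univ.filter (fun i => (i : ℕ) < k)) +
          distWithin y (Finset.univ.filter (fun i => k ≤ (i : ℕ))) ≤
        distWithin y S + distWithin y T)
    (x : Fin M → ℝ) (hx : Monotone x) :
    ∀ (n : ℕ) (W : Finset (Fin M)) (h : W.card = k * n)
      (ι : Type) (_ : DecidableEq ι) (_ : Fintype ι), Fintype.card ι = n →
      ∀ (S : ι → Finset (Fin M)), (∀ i, (S i).card = k) →
      (Pairwise fun a b => Disjoint (S a) (S b)) → (∀ i, S i ⊆ W) →
      (∀ w ∈ W, ∃ i, w ∈ S i) →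
      ∑ m : Fin n, distWithin x (cblock W h m) ≤ ∑ i, distWithin x (S i) := by
  intro n
  induction n with
  | zero =>
    intro W h ι _ _ hι S hcard hdisj hsub hcover
    haveI : IsEmpty ι := Fintype.card_eq_zero_iff.mp hι
    simp
  | succ n ihn =>
    intro W h ι _ _ hι S hcard hdisj hsub hcover
    haveI : Nonempty ι := Fintype.card_pos_iff.mp (by omega)
    set a := Classical.arbitrary ι with ha_def
    set Top := cblock W h (Fin.last n) with hTop_def
    obtain ⟨S', hcard', hdisj', hsub', hcover', hS'a, hcost1⟩ :=
      gather hk hyp x hx W Top (cblock_card W h _) (cblock_subset W h _)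
        (cblock_last_ord W h) k S hcard hdisj hsub hcover a (Nat.sub_le _ _)
    set W' := W \ Top with hW'_def
    have h' : W'.card = k * n := cblock_sdiff_card W h
    set ι' := {i : ι // i ≠ a} with hι'_def
    have hι' : Fintype.card ι' = n := by
      have h1 : Fintype.card {i : ι // ¬ i = a} =
          Fintype.card ι - Fintype.card {i : ι // i = a} :=
        Fintype.card_subtype_compl _
      have h2 : Fintype.card {i : ι // i = a} = 1 := Fintype.card_subtype_eq a
      have h3 : Fintype.card ι' = Fintype.card {i : ι // ¬ i = a} :=
        Fintype.card_congr (Equiv.subtypeEquivRight (fun i => Iff.rfl))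
      omega
    set S'' : ι' → Finset (Fin M) := fun i => S' i.1 with hS''_def
    have hcard'' : ∀ i, (S'' i).card = k := fun i => hcard' i.1
    have hdisj'' : Pairwise fun a b => Disjoint (S'' a) (S'' b) := by
      intro i j hij
      exact hdisj' (Subtype.coe_injective.ne hij)
    have hsub'' : ∀ i, S'' i ⊆ W' := by
      intro i w hw
      rw [hW'_def, Finset.mem_sdiff]
      refine ⟨hsub' i.1 hw, fun hwT => ?_⟩
      have : w ∈ S' a := hS'a ▸ hwT
      exact (Finset.disjoint_left.mp (hdisj' i.2) hw) this
    have hcover'' : ∀ w ∈ W', ∃ i, w ∈ S'' i := by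
      intro w hw
      rw [hW'_def, Finset.mem_sdiff] at hw
      obtain ⟨i, hi⟩ := hcover' w hw.1
      have hia : i ≠ a := by
        rintro rfl
        exact hw.2 (hS'a ▸ hi)
      exact ⟨⟨i, hia⟩, hi⟩
    have hIH := ihn W' h' ι' inferInstance inferInstance hι' S''
      hcard'' hdisj'' hsub'' hcover''
    -- LHS
    have hLHS : ∑ m : Fin (n+1), distWithin x (cblock W h m)
        = (∑ m : Fin n, distWithin x (cblock W' h' m)) + distWithin x Top := by
      rw [Fin.sum_univ_castSucc]
      congr 1
      exact Finset.sum_congr rfl (fun m _ => by rw [cblock_prefix W h h' m])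
    -- RHS
    have hRHS : ∑ i, distWithin x (S' i)
        = distWithin x Top + ∑ i : ι', distWithin x (S'' i) := by
      rw [← Finset.add_sum_erase Finset.univ _ (Finset.mem_univ a), hS'a]
      congr 1
      exact Finset.sum_subtype (Finset.univ.erase a)
        (fun i => by simp [Finset.mem_erase]) (fun i => distWithin x (S' i))
    rw [hLHS]
    calc (∑ m : Fin n, distWithin x (cblock W' h' m)) + distWithin x Top
        ≤ (∑ i : ι', distWithin x (S'' i)) + distWithin x Top := by linarith
      _ = ∑ i, distWithin x (S' i) := by rw [hRHS]; ring
      _ ≤ ∑ i, distWithin x (S i) := hcost1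

/-- If for every sorted `2k`-tuple the consecutive split into the first `k` and
last `k` entries minimizes the total distance within over all partitions into
two `k`-element subsets, then for every `n ≥ 1` and every sorted `kn`-tuple the
partition into the `n` consecutive blocks of length `k` minimizes the total
distance within over all partitions into `n` pairwise disjoint `k`-element
subsets. -/
theorem consecutive_blocks_min_of_pair_min (k : ℕ) (hk : 1 ≤ k)
    (hyp : ∀ (y : Fin (2 * k) → ℝ), Monotone y →
      ∀ S T : Finset (Fin (2 * k)), S.card = k → T.card = k → Disjoint S T →
        S ∪ T = Finset.univ →
        distWithin y (Finset.univ.filter (fun i => (i : ℕ) < k)) +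
          distWithin y (Finset.univ.filter (fun i => k ≤ (i : ℕ))) ≤
        distWithin y S + distWithin y T)
    (n : ℕ) (hn : 1 ≤ n) (x : Fin (k * n) → ℝ) (hx : Monotone x)
    (S : Fin n → Finset (Fin (k * n))) (hcard : ∀ m, (S m).card = k)
    (hdisj : Pairwise fun a b => Disjoint (S a) (S b))
    (hunion : (⋃ m, (S m : Set (Fin (k * n)))) = Set.univ) :
    ∑ m : Fin n, distWithin x
        (Finset.univ.filter
          (fun i => (m : ℕ) * k ≤ (i : ℕ) ∧ (i : ℕ) < (m : ℕ) * k + k)) ≤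
      ∑ m : Fin n, distWithin x (S m) := by
  have h0 : (Finset.univ : Finset (Fin (k*n))).card = k * n := by simp
  have hcover : ∀ w ∈ (Finset.univ : Finset (Fin (k*n))), ∃ m, w ∈ S m := by
    intro w _
    have hw : w ∈ ⋃ m, (S m : Set (Fin (k*n))) := hunion ▸ Set.mem_univ w
    obtain ⟨m, hm⟩ := Set.mem_iUnion.mp hw
    exact ⟨m, hm⟩
  have hmain := main_lemma hk hyp x hx n Finset.univ h0 (Fin n) inferInstance
    inferInstance (by simp) S hcard hdisj (fun m => Finset.subset_univ _) hcover
  have hid : ∀ i : Fin (k*n), (Finset.univ.orderEmbOfFin h0) i = i := by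
    have heq : (OrderEmbedding.ofStrictMono (id : Fin (k*n) → Fin (k*n)) strictMono_id)
        = Finset.univ.orderEmbOfFin h0 :=
      Finset.orderEmbOfFin_unique' h0 (fun i => Finset.mem_univ _)
    intro i; rw [← heq]; rfl
  have hcb : ∀ m : Fin n, cblock Finset.univ h0 m =
      Finset.univ.filter
        (fun i : Fin (k*n) => (m:ℕ)*k ≤ (i:ℕ) ∧ (i:ℕ) < (m:ℕ)*k + k) := by
    intro m
    unfold cblock
    rw [Finset.image_congr (fun i _ => hid i), Finset.image_id']
  calc ∑ m : Fin n, distWithin x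
        (Finset.univ.filter
          (fun i => (m : ℕ) * k ≤ (i : ℕ) ∧ (i : ℕ) < (m : ℕ) * k + k))
      = ∑ m : Fin n, distWithin x (cblock Finset.univ h0 m) :=
        Finset.sum_congr rfl (fun m _ => by rw [hcb m])
    _ ≤ ∑ m : Fin n, distWithin x (S m) := hmain
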